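/- Let T be a tournament on n vertices and M a set of m vertices whose out-degrees sum to m(m-1)/2. Then no directed (consistently oriented) cycle of T contains both a vertex of M and a vertex outside M. -/

import Mathlib

open Finset

/-- A tournament on `Fin n`: irreflexive, and between any two distinct
vertices exactly one directed edge. -/
def IsTournament {n : ℕ} (T : Fin n → Fin n → Bool) : Prop :=
  (∀ v, T v v = false) ∧ ∀ u v : Fin n, u ≠ v → (T u v = !T v u)

/-- The score (out-degree) of a vertex in a tournament. -/
def score {n : ℕ} (T : Fin n → Fin n → Bool) (v : Fin n) : ℕ :=
  (Finset.univ.filter (fun w => T v w = true)).card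

/-- A consistently oriented (directed) cycle, given by an injective cyclic
sequence of vertices each beating the next. -/
def IsDirCycle {n m : ℕ} (T : Fin n → Fin n → Bool) (c : Fin (m + 1) → Fin n) : Prop :=
  Function.Injective c ∧ ∀ i, T (c i) (c (i + 1)) = true

open Fin.NatCast

lemma internal_sum {n : ℕ} (T : Fin n → Fin n → Bool) (hT : IsTournament T)
    (M : Finset (Fin n)) :
    2 * ∑ v ∈ M, (M.filter (fun w => T v w = true)).card = M.card * (M.card - 1) := by
  have key : ∀ v ∈ M, ∀ w ∈ M,
      ((if T v w = true then 1 else 0) + (if T w v = true then 1 else 0) : ℕ)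
        = if v = w then 0 else 1 := by
    intro v _ w _
    by_cases hvw : v = w
    · subst hvw; simp [hT.1 v]
    · have := hT.2 v w hvw
      rcases Bool.eq_false_or_eq_true (T v w) with h | h <;>
        simp_all
  calc 2 * ∑ v ∈ M, (M.filter (fun w => T v w = true)).card
      = ∑ v ∈ M, ∑ w ∈ M, ((if T v w = true then 1 else 0)
          + (if T w v = true then 1 else 0) : ℕ) := by
        simp only [Finset.sum_add_distrib, Finset.card_filter, two_mul]
        congr 1
        exact Finset.sum_comm
    _ = ∑ v ∈ M, ∑ w ∈ M, (if v = w then 0 else 1 : ℕ) := by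
        refine Finset.sum_congr rfl fun v hv => Finset.sum_congr rfl fun w hw => ?_
        exact key v hv w hw
    _ = M.card * (M.card - 1) := by
        have h1 : ∀ v ∈ M, ∑ w ∈ M, (if v = w then 0 else 1 : ℕ) = M.card - 1 := by
          intro v hv
          have : ∀ w ∈ M, (if v = w then 0 else 1 : ℕ) = if v ≠ w then 1 else 0 := by
            intro w _; by_cases h : v = w <;> simp [h]
          rw [Finset.sum_congr rfl this, ← Finset.card_filter, Finset.filter_ne,
            Finset.card_erase_of_mem hv]
        rw [Finset.sum_congr rfl h1, Finset.sum_const, smul_eq_mul]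

/-- If the out-degrees of a set `M` of `m` vertices sum to `m(m-1)/2`, then no
directed cycle contains both a vertex of `M` and a vertex outside `M`. -/
theorem no_directed_cycle_crossing {n : ℕ} (T : Fin n → Fin n → Bool)
    (hT : IsTournament T) (M : Finset (Fin n))
    (hsum : ∑ v ∈ M, score T v = M.card * (M.card - 1) / 2) :
    ∀ (m : ℕ) (c : Fin (m + 1) → Fin n), IsDirCycle T c →
      ¬ ((∃ i, c i ∈ M) ∧ (∃ j, c j ∉ M)) := by
  rintro m c hc ⟨⟨i, hi⟩, ⟨j, hj⟩⟩
  have hA := internal_sum T hT M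
  have hsplit : ∀ v, score T v = (M.filter (fun w => T v w = true)).card
      + ((Mᶜ).filter (fun w => T v w = true)).card := by
    intro v
    rw [score, ← Finset.card_union_of_disjoint
      (Finset.disjoint_filter_filter disjoint_compl_right),
      ← Finset.filter_union, Finset.union_compl]
  have hS : ∑ v ∈ M, score T v = (∑ v ∈ M, (M.filter (fun w => T v w = true)).card)
      + ∑ v ∈ M, ((Mᶜ).filter (fun w => T v w = true)).card := by
    simp only [hsplit]; exact Finset.sum_add_distrib
  have hB : ∑ v ∈ M, ((Mᶜ).filter (fun w => T v w = true)).card = 0 := by omega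
  have hno : ∀ v ∈ M, ∀ w, w ∉ M → ¬ (T v w = true) := by
    intro v hv w hw
    have h0 := Finset.sum_eq_zero_iff.mp hB v hv
    rw [Finset.card_eq_zero, Finset.filter_eq_empty_iff] at h0
    exact h0 (Finset.mem_compl.mpr hw)
  have step : ∀ k : ℕ, c (i + (k : Fin (m+1))) ∈ M := by
    intro k
    induction k with
    | zero => simpa using hi
    | succ k ih =>
      by_contra hk
      have hcast : ((k+1 : ℕ) : Fin (m+1)) = (k : Fin (m+1)) + 1 := by push_cast; ring
      rw [hcast, ← add_assoc] at hk
      exact hno _ ih _ hk (hc.2 (i + (k : Fin (m+1))))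
  have hjM := step (j - i).val
  rw [Fin.cast_val_eq_self] at hjM
  have hij : i + (j - i) = j := by abel
  rw [hij] at hjM
  exact hj hjM
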